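/- Let r ≥ 1 and let p_1 < p_2 < ⋯ < p_r be integers with p_1 ≥ 2. Let t : {1,2,3,…} → ℕ be a finitely supported function. Then t satisfies both Σ_i t_i(2^i − 1) = (2^{p_1} + ⋯ + 2^{p_r}) − r and Σ_i t_i ≤ r if and only if t_i = 1 when i ∈ {p_1,…,p_r} and t_i = 0 otherwise. -/

import Mathlib

open Finset

/-- Any multiset of exponents can be "carried" into a strictly sorted list with the same
power-of-two sum, no larger length, and equality of lengths forcing equality. -/
lemma reduce_aux : ∀ (n : ℕ) (m : Multiset ℕ), Multiset.card m = n → ∃ L : List ℕ,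
    L.SortedLT ∧ (L.map (2 ^ ·)).sum = (m.map (2 ^ ·)).sum ∧
    L.length ≤ Multiset.card m ∧ (L.length = Multiset.card m → (↑L : Multiset ℕ) = m) := by
  intro n
  induction n using Nat.strong_induction_on with
  | _ n IH =>
    intro m hcard
    by_cases hnd : m.Nodup
    · refine ⟨Finset.sort ⟨m, hnd⟩ (· ≤ ·), Finset.sortedLT_sort _, ?_, ?_, fun _ => ?_⟩
      · have h : (↑(Finset.sort ⟨m, hnd⟩ (· ≤ ·)) : Multiset ℕ) = m := Finset.sort_eq _ _
        calc (List.map (2 ^ ·) (Finset.sort ⟨m, hnd⟩ (· ≤ ·))).sum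
            = ((↑(Finset.sort ⟨m, hnd⟩ (· ≤ ·)) : Multiset ℕ).map (2 ^ ·)).sum := rfl
          _ = (m.map (2 ^ ·)).sum := by rw [h]
      · have h : (↑(Finset.sort ⟨m, hnd⟩ (· ≤ ·)) : Multiset ℕ) = m := Finset.sort_eq _ _
        refine le_of_eq ?_
        calc (Finset.sort ⟨m, hnd⟩ (· ≤ ·)).length
            = Multiset.card (↑(Finset.sort ⟨m, hnd⟩ (· ≤ ·)) : Multiset ℕ) := rfl
          _ = Multiset.card m := by rw [h]
      · exact Finset.sort_eq _ _
    · rw [Multiset.nodup_iff_count_le_one] at hnd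
      push_neg at hnd
      obtain ⟨a, ha⟩ := hnd
      have ha2 : 2 ≤ m.count a := ha
      have hrep : Multiset.replicate 2 a ≤ m := Multiset.le_count_iff_replicate_le.1 ha2
      set m₀ := m - Multiset.replicate 2 a with hm₀
      have hm : m = Multiset.replicate 2 a + m₀ := by
        rw [hm₀, add_comm, tsub_add_cancel_of_le hrep]
      have hcard0 : Multiset.card m = Multiset.card m₀ + 2 := by
        rw [hm]; simp [Multiset.card_replicate]
      have hlt : Multiset.card ((a+1) ::ₘ m₀) < n := by
        rw [Multiset.card_cons]; omega
      obtain ⟨L, hs, hsum, hlen, _⟩ := IH _ hlt ((a+1) ::ₘ m₀) rfl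
      refine ⟨L, hs, ?_, ?_, ?_⟩
      · rw [hsum, hm]
        simp [Multiset.map_replicate, Multiset.sum_replicate, pow_succ]
        ring
      · rw [Multiset.card_cons] at hlen; omega
      · intro hEq
        rw [Multiset.card_cons] at hlen; omega

/-- binary representation length is subadditive -/
lemma pc_add (x y : ℕ) :
    (x + y).bitIndices.length ≤ x.bitIndices.length + y.bitIndices.length := by
  obtain ⟨L, hs, hsum, hlen, _⟩ := reduce_aux _ (↑x.bitIndices + ↑y.bitIndices) rfl
  have hxy : (L.map (2 ^ ·)).sum = x + y := by
    rw [hsum, Multiset.map_add, Multiset.sum_add]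
    change (x.bitIndices.map (2 ^ ·)).sum + (y.bitIndices.map (2 ^ ·)).sum = x + y
    rw [Nat.twoPowSum_bitIndices, Nat.twoPowSum_bitIndices]
  have hL : (x + y).bitIndices = L := by
    rw [← hxy, Nat.bitIndices_twoPowsum hs]
  rw [hL]
  simpa using hlen

lemma pc_le (n : ℕ) : n.bitIndices.length ≤ n := by
  have h1 : (n.bitIndices.map (fun _ => 1)).sum ≤ (n.bitIndices.map (2 ^ ·)).sum :=
    List.sum_le_sum (fun i _ => Nat.one_le_two_pow)
  rw [Nat.twoPowSum_bitIndices] at h1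
  simpa using h1

lemma pc_lt (n : ℕ) (hn : 2 ≤ n) : n.bitIndices.length < n := by
  rcases Nat.even_or_odd n with ⟨q, hq⟩ | ⟨q, hq⟩
  · have hq' : n = 2 * q := by omega
    subst hq'
    rw [Nat.bitIndices_two_mul, List.length_map]
    have := pc_le q
    omega
  · subst hq
    rw [Nat.bitIndices_two_mul_add_one]
    simp only [List.length_cons, List.length_map]
    have := pc_le q
    omega

lemma listsum_range (f : ℕ → ℕ) : ∀ n : ℕ, ((List.range n).map f).sum = ∑ k ∈ Finset.range n, f k := by
  intro n
  induction n with
  | zero => simp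
  | succ n ih =>
    rw [List.range_succ, Finset.sum_range_succ, List.map_append, List.sum_append, ih]
    simp

lemma msum_card (t : ℕ → ℕ) (s : Finset ℕ) :
    Multiset.card (∑ i ∈ s, Multiset.replicate (t i) i) = ∑ i ∈ s, t i := by
  induction s using Finset.cons_induction with
  | empty => simp
  | cons a s ha ih => simp [Finset.sum_cons, ih]

lemma msum_map (t f : ℕ → ℕ) (s : Finset ℕ) :
    ((∑ i ∈ s, Multiset.replicate (t i) i).map f).sum = ∑ i ∈ s, t i * f i := by
  induction s using Finset.cons_induction with
  | empty => simp
  | cons a s ha ih =>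
    rw [Finset.sum_cons, Finset.sum_cons, Multiset.map_add, Multiset.sum_add, ih,
      Multiset.map_replicate, Multiset.sum_replicate, smul_eq_mul]

/-- Lemma 2.4: for `p_1 < ⋯ < p_r` with `p_1 ≥ 2`, a finitely supported
`t : {1,2,3,…} → ℕ` satisfies `∑ t_i (2^i - 1) = (2^{p_1} + ⋯ + 2^{p_r}) - r` and
`∑ t_i ≤ r` iff `t_i = 1` for `i ∈ {p_1, …, p_r}` and `t_i = 0` otherwise. -/
theorem statement3 (r : ℕ) (hr : 1 ≤ r) (p : ℕ → ℕ) (hp1 : 2 ≤ p 1)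
    (hmono : ∀ i j, 1 ≤ i → i < j → j ≤ r → p i < p j)
    (t : ℕ → ℕ) (ht0 : t 0 = 0) (hfin : {i | t i ≠ 0}.Finite) :
    ((∑ᶠ i, t i * (2 ^ i - 1)) = (∑ j ∈ Finset.Icc 1 r, 2 ^ p j) - r ∧ (∑ᶠ i, t i) ≤ r) ↔
      ∀ i, 1 ≤ i → t i = if i ∈ (Finset.Icc 1 r).image p then 1 else 0 := by
  set S := ∑ j ∈ Finset.Icc 1 r, 2 ^ p j with hS
  have hp2 : ∀ j, 1 ≤ j → j ≤ r → 2 ≤ p j := by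
    intro j h1 h2
    rcases eq_or_lt_of_le h1 with h | h
    · rwa [← h]
    · exact le_of_lt (lt_of_le_of_lt hp1 (hmono 1 j le_rfl h h2))
  -- the sorted list of exponents
  set P : List ℕ := (List.range r).map (fun k => p (k + 1)) with hP
  have hPsorted : P.SortedLT := by
    rw [hP, List.sortedLT_iff_pairwise]
    rw [List.pairwise_map]
    refine List.Pairwise.imp_of_mem ?_ (List.pairwise_lt_range (n := r))
    intro a b ha hb hab
    exact hmono (a + 1) (b + 1) (by omega) (by omega)
      (by have := List.mem_range.1 hb; omega)
  have hPlen : P.length = r := by simp [hP]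
  have hPsum : (P.map (2 ^ ·)).sum = S := by
    rw [hS, hP, List.map_map]
    have h1 : ∑ j ∈ Finset.Icc 1 r, 2 ^ p j = ∑ k ∈ Finset.range r, 2 ^ p (k + 1) := by
      rw [← Finset.Ico_add_one_right_eq_Icc, Finset.sum_Ico_eq_sum_range]
      simp [add_comm]
    rw [h1, listsum_range]
    rfl
  have hbS : S.bitIndices = P := by rw [← hPsum, Nat.bitIndices_twoPowsum hPsorted]
  have hmemP : ∀ i, i ∈ P ↔ i ∈ (Finset.Icc 1 r).image p := by
    intro i
    simp only [hP, List.mem_map, List.mem_range, Finset.mem_image, Finset.mem_Icc]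
    constructor
    · rintro ⟨k, hk, rfl⟩; exact ⟨k + 1, ⟨by omega, by omega⟩, rfl⟩
    · rintro ⟨j, ⟨hj1, hj2⟩, rfl⟩; exact ⟨j - 1, by omega, by rw [Nat.sub_add_cancel hj1]⟩
  have hSr : r ≤ S := by
    calc r = ∑ _j ∈ Finset.Icc 1 r, 1 := by simp
    _ ≤ S := Finset.sum_le_sum (fun j _ => Nat.one_le_two_pow)
  have hSeven : 2 ∣ S :=
    Finset.dvd_sum (fun j hj => dvd_pow_self 2 (by
      have := hp2 j (Finset.mem_Icc.1 hj).1 (Finset.mem_Icc.1 hj).2; omega))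
  set s₀ := hfin.toFinset with hs₀
  have hmem₀ : ∀ i, i ∈ s₀ ↔ t i ≠ 0 := fun i => hfin.mem_toFinset
  have hA : (∑ᶠ i, t i * (2 ^ i - 1)) = ∑ i ∈ s₀, t i * (2 ^ i - 1) := by
    apply finsum_eq_finset_sum_of_support_subset
    intro i hi
    simp only [Function.mem_support] at hi
    exact (hmem₀ i).2 (fun h => hi (by rw [h, zero_mul]))
  have hB : (∑ᶠ i, t i) = ∑ i ∈ s₀, t i := by
    apply finsum_eq_finset_sum_of_support_subset
    intro i hi
    exact (hmem₀ i).2 hi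
  constructor
  · rintro ⟨h1, h2⟩
    rw [hA] at h1; rw [hB] at h2
    set c := ∑ i ∈ s₀, t i with hc
    set m : Multiset ℕ := ∑ i ∈ s₀, Multiset.replicate (t i) i with hm
    have hcount : ∀ j, m.count j = t j := by
      intro j
      rw [hm, Multiset.count_sum']
      by_cases hj : j ∈ s₀
      · rw [Finset.sum_eq_single_of_mem j hj]
        · simp [Multiset.count_replicate]
        · intro b _ hb; simp [Multiset.count_replicate, hb]
      · have htj : t j = 0 := by_contra (fun h => hj ((hmem₀ j).2 h))
        rw [htj]
        refine Finset.sum_eq_zero (fun b hb => ?_)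
        rw [Multiset.count_replicate]
        exact if_neg (fun (hbj : b = j) => hj (hbj ▸ hb))
    have hcard : Multiset.card m = c := by rw [hm, hc, msum_card]
    have hmsum : ∀ f : ℕ → ℕ, (m.map f).sum = ∑ i ∈ s₀, t i * f i := by
      intro f
      rw [hm, msum_map]
    -- key arithmetic
    have hX : (m.map (2 ^ ·)).sum = S - r + c := by
      rw [hmsum]
      have : ∀ i, t i * 2 ^ i = t i * (2 ^ i - 1) + t i := by
        intro i
        have := Nat.one_le_two_pow (n := i)
        cases' Nat.exists_eq_add_of_le this with k hk
        rw [hk, Nat.add_sub_cancel_left]; ring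
      simp_rw [this]
      rw [Finset.sum_add_distrib, h1]
    obtain ⟨L, hLs, hLsum, hLlen, hLeq⟩ := reduce_aux _ m rfl
    have hLbi : (S - r + c).bitIndices = L := by
      rw [← Nat.bitIndices_twoPowsum hLs, hLsum, hX]
    have hcr : c = r := by
      by_contra hne
      have hclt : c < r := lt_of_le_of_ne h2 hne
      set d := r - c with hd
      have hd1 : 1 ≤ d := by omega
      have hXS : (S - r + c) + d = S := by omega
      have hpcS : S.bitIndices.length = r := by rw [hbS, hPlen]
      have hsub := pc_add (S - r + c) d
      rw [hXS, hpcS, hLbi] at hsub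
      have hLc : L.length ≤ c := hLlen.trans (le_of_eq hcard)
      rcases eq_or_lt_of_le hd1 with hd2 | hd2
      · -- d = 1 : parity contradiction
        have heven : 2 ∣ (m.map (2 ^ ·)).sum := by
          rw [hmsum]
          refine Finset.dvd_sum (fun i hi => ?_)
          have hi1 : 1 ≤ i := by
            have := (hmem₀ i).1 hi
            rcases Nat.eq_zero_or_pos i with h0 | h0
            · exact absurd (h0 ▸ ht0) this
            · exact h0
          exact Dvd.dvd.mul_left (dvd_pow_self 2 (by omega)) _
        rw [hX] at heven
        omega
      · have := pc_lt d hd2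
        omega
    -- now c = r, so X = S and L = P
    have hLP : L = P := by rw [← hLbi, hcr]; rw [Nat.sub_add_cancel hSr, hbS]
    have hmP : (↑P : Multiset ℕ) = m := by
      rw [← hLP]
      exact hLeq (by rw [hLP, hPlen, hcard, hcr])
    intro i _
    rw [← hcount i, ← hmP, Multiset.coe_count]
    by_cases hi : i ∈ (Finset.Icc 1 r).image p
    · rw [if_pos hi]
      exact List.count_eq_one_of_mem (hPsorted.nodup) ((hmemP i).2 hi)
    · rw [if_neg hi]
      exact List.count_eq_zero_of_not_mem (fun h => hi ((hmemP i).1 h))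
  · intro hind
    have hindAll : ∀ i, t i = if i ∈ (Finset.Icc 1 r).image p then 1 else 0 := by
      intro i
      rcases Nat.eq_zero_or_pos i with h0 | h0
      · subst h0
        rw [ht0, if_neg]
        intro h
        obtain ⟨j, hj, hpj⟩ := Finset.mem_image.1 h
        have := hp2 j (Finset.mem_Icc.1 hj).1 (Finset.mem_Icc.1 hj).2
        omega
      · exact hind i h0
    set E := (Finset.Icc 1 r).image p with hE
    have hinj : Set.InjOn p ↑(Finset.Icc 1 r) := by
      intro a ha b hb hab
      simp only [Finset.coe_Icc, Set.mem_Icc] at ha hb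
      by_contra hne
      rcases lt_or_gt_of_ne hne with h | h
      · exact absurd hab (ne_of_lt (hmono a b ha.1 h hb.2))
      · exact absurd hab.symm (ne_of_lt (hmono b a hb.1 h ha.2))
    have hcardE : E.card = r := by
      rw [hE, Finset.card_image_of_injOn hinj, Nat.card_Icc]; omega
    have hsupp : ∀ i, t i ≠ 0 → i ∈ E := by
      intro i hi
      by_contra h
      exact hi (by rw [hindAll i, if_neg h])
    have hA' : (∑ᶠ i, t i * (2 ^ i - 1)) = ∑ i ∈ E, t i * (2 ^ i - 1) := by
      apply finsum_eq_finset_sum_of_support_subset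
      intro i hi
      simp only [Function.mem_support] at hi
      exact hsupp i (fun h => hi (by rw [h, zero_mul]))
    have hB' : (∑ᶠ i, t i) = ∑ i ∈ E, t i := by
      exact finsum_eq_finset_sum_of_support_subset _ (fun i hi => hsupp i hi)
    have htE : ∀ i ∈ E, t i = 1 := by
      intro i hi; rw [hindAll i, if_pos hi]
    constructor
    · rw [hA']
      have h1 : ∑ i ∈ E, t i * (2 ^ i - 1) = ∑ i ∈ E, (2 ^ i - 1) :=
        Finset.sum_congr rfl (fun i hi => by rw [htE i hi, one_mul])
      rw [h1, hE, Finset.sum_image hinj]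
      have h2 : (∑ j ∈ Finset.Icc 1 r, (2 ^ p j - 1)) + r = S := by
        rw [hS]
        have : ∀ j ∈ Finset.Icc 1 r, 2 ^ p j - 1 + 1 = 2 ^ p j := fun j _ => by
          have := Nat.one_le_two_pow (n := p j); omega
        calc (∑ j ∈ Finset.Icc 1 r, (2 ^ p j - 1)) + r
            = ∑ j ∈ Finset.Icc 1 r, ((2 ^ p j - 1) + 1) := by
              rw [Finset.sum_add_distrib]; simp
          _ = ∑ j ∈ Finset.Icc 1 r, 2 ^ p j := Finset.sum_congr rfl this
      omega
    · rw [hB']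
      have : ∑ i ∈ E, t i = ∑ i ∈ E, 1 := Finset.sum_congr rfl htE
      rw [this]
      simp [hcardE]
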